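/- arXiv:1809.09706 — 2 statements merged into one kernel-verified Lean document; each statement's English description precedes it below -/
import Mathlib

section
/- Let B be a nonzero r-vector in the exterior algebra of ℝ^n satisfying the Plücker relations, and suppose the coefficient B_J = ⟨B, e_j ∧ e_K⟩ is nonzero, where e_J = e_j ∧ e_K for a coordinate vector e_j and coordinate (r−1)-blade e_K. Then B = B_J^{-1} (e_K · B) ∧ (e_j · B), where e_j · B is the (r−1)-vector obtained by contracting B with e_j and e_K · B is a vector. -/
noncomputable section

open CliffordAlgebra

/-- The Euclidean quadratic form on `ℝⁿ`. -/
def Qe (n : ℕ) : QuadraticForm ℝ (EuclideanSpace ℝ (Fin n)) :=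
  LinearMap.BilinMap.toQuadraticMap (innerₗ (EuclideanSpace ℝ (Fin n)))

/-- The geometric (Clifford) algebra `𝒢ₙ` of Euclidean `ℝⁿ`. -/
abbrev GA (n : ℕ) := CliffordAlgebra (Qe n)

/-- The canonical linear equivalence with the exterior algebra of `ℝⁿ`,
identifying multivectors with elements of the exterior algebra. -/
def toExt {n : ℕ} : GA n ≃ₗ[ℝ] ExteriorAlgebra ℝ (EuclideanSpace ℝ (Fin n)) :=
  CliffordAlgebra.equivExterior (Qe n)

/-- The outer (wedge) product of multivectors, transported from the exterior algebra. -/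
def wedge {n : ℕ} (x y : GA n) : GA n := toExt.symm (toExt x * toExt y)

/-- The submodule of homogeneous multivectors of grade `r` (`r`-vectors). -/
def gradeSub (n r : ℕ) : Submodule ℝ (GA n) :=
  (⋀[ℝ]^r (EuclideanSpace ℝ (Fin n))).comap (toExt (n := n)).toLinearMap

/-- The projection onto the grade-`r` part, `⟨·⟩_r`. -/
def gproj (n r : ℕ) : GA n →ₗ[ℝ] GA n :=
  (toExt (n := n)).symm.toLinearMap ∘ₗ
    (GradedAlgebra.proj (fun i : ℕ => ⋀[ℝ]^i (EuclideanSpace ℝ (Fin n))) r) ∘ₗ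
    (toExt (n := n)).toLinearMap

/-- The scalar (grade-0) part of a multivector, as a real number. -/
def scalarPart {n : ℕ} (x : GA n) : ℝ := ExteriorAlgebra.algebraMapInv (toExt x)

/-- The `i`-th orthonormal basis vector of `ℝⁿ`, as a multivector. -/
def bv (n : ℕ) (i : Fin n) : GA n := ι (Qe n) (EuclideanSpace.single i 1)

/-- The coordinate basis blade `e_J` for an index set `J`, the product of the
basis vectors indexed by `J` in increasing order. -/
def eB (n : ℕ) (J : Finset (Fin n)) : GA n :=
  ((J.sort (· ≤ ·)).map (bv n)).prod

/-- The outer product `v 0 ∧ v 1 ∧ ⋯` of a family of vectors. -/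
def bladeOf {n r : ℕ} (v : Fin r → EuclideanSpace ℝ (Fin n)) : GA n :=
  ((List.ofFn fun i => ι (Qe n) (v i)).foldr wedge 1)

/-- `B` is an `r`-blade: an outer product of `r` vectors. -/
def IsBlade (n r : ℕ) (B : GA n) : Prop :=
  ∃ v : Fin r → EuclideanSpace ℝ (Fin n), B = bladeOf v

/-- The contraction (interior product) `A · B`, extracting the grade-`g` part of the
geometric product `A† B`. -/
def contr {n : ℕ} (g : ℕ) (A B : GA n) : GA n := gproj n g (reverse A * B)

section Aux

open ExteriorAlgebra

variable {n : ℕ}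

local notation "𝒜" => (fun i : ℕ => ⋀[ℝ]^i (EuclideanSpace ℝ (Fin n)))

lemma expow_def (k : ℕ) : ⋀[ℝ]^k (EuclideanSpace ℝ (Fin n)) =
    (LinearMap.range (ExteriorAlgebra.ι ℝ (M := EuclideanSpace ℝ (Fin n))))^k := rfl

lemma toExt_ι_mul (m : EuclideanSpace ℝ (Fin n)) (x : GA n) :
    toExt (ι (Qe n) m * x) =
      ExteriorAlgebra.ι ℝ m * toExt x -
        CliffordAlgebra.contractLeft (QuadraticMap.associated (R := ℝ) (-Qe n) m) (toExt x) :=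
  CliffordAlgebra.changeForm_ι_mul (h := CliffordAlgebra.changeForm.associated_neg_proof) _ _

lemma Bf_single (i k : Fin n) :
    QuadraticMap.associated (R := ℝ) (-Qe n) (EuclideanSpace.single i 1)
      (EuclideanSpace.single k 1) = if i = k then -1 else 0 := by
  rw [QuadraticMap.associated_apply]
  simp [Qe, EuclideanSpace.inner_single_left, EuclideanSpace.single_apply]
  rcases eq_or_ne i k with h|h
  · simp [h]; norm_num
  · simp [h, Ne.symm h]

lemma toExt_bv (i : Fin n) : toExt (bv n i) = ExteriorAlgebra.ι ℝ (EuclideanSpace.single i 1) :=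
  CliffordAlgebra.changeForm_ι (h := CliffordAlgebra.changeForm.associated_neg_proof) _

lemma toExt_wedge (x y : GA n) : toExt (wedge x y) = toExt x * toExt y := by
  simp [wedge]

lemma toExt_gproj (g : ℕ) (x : GA n) :
    toExt (gproj n g x) = GradedAlgebra.proj 𝒜 g (toExt x) := by
  simp [gproj]

lemma contr_zero (d : Module.Dual ℝ (EuclideanSpace ℝ (Fin n)))
    {x : ExteriorAlgebra ℝ (EuclideanSpace ℝ (Fin n))} (h : x ∈ ⋀[ℝ]^0 (EuclideanSpace ℝ (Fin n))) :
    CliffordAlgebra.contractLeft d x = 0 := by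
  rw [expow_def, pow_zero, Submodule.mem_one] at h
  obtain ⟨y, rfl⟩ := h
  exact CliffordAlgebra.contractLeft_algebraMap _ _ _

lemma ι_mem_one (v : EuclideanSpace ℝ (Fin n)) :
    ExteriorAlgebra.ι ℝ v ∈ ⋀[ℝ]^1 (EuclideanSpace ℝ (Fin n)) := by
  rw [expow_def, pow_one]; exact ⟨v, rfl⟩

lemma contr_mem_succ (d : Module.Dual ℝ (EuclideanSpace ℝ (Fin n))) :
    ∀ (k : ℕ) {x : ExteriorAlgebra ℝ (EuclideanSpace ℝ (Fin n))},
      x ∈ ⋀[ℝ]^(k+1) (EuclideanSpace ℝ (Fin n)) →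
        CliffordAlgebra.contractLeft d x ∈ ⋀[ℝ]^k (EuclideanSpace ℝ (Fin n)) := by
  intro k
  induction k with
  | zero =>
    intro x hx
    rw [expow_def, pow_succ'] at hx
    refine Submodule.mul_induction_on hx ?_ ?_
    · rintro _ ⟨v, rfl⟩ y hy
      rw [CliffordAlgebra.contractLeft_ι_mul, contr_zero d hy, mul_zero, sub_zero]
      exact Submodule.smul_mem _ _ hy
    · intro a b ha hb
      rw [map_add]; exact Submodule.add_mem _ ha hb
  | succ m ih =>
    intro x hx
    rw [expow_def, pow_succ'] at hx
    refine Submodule.mul_induction_on hx ?_ ?_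
    · rintro _ ⟨v, rfl⟩ y hy
      rw [CliffordAlgebra.contractLeft_ι_mul]
      refine Submodule.sub_mem _ (Submodule.smul_mem _ _ hy) ?_
      have := SetLike.mul_mem_graded (A := 𝒜) (ι_mem_one v) (ih hy)
      simpa [Nat.add_comm] using this
    · intro a b ha hb
      rw [map_add]; exact Submodule.add_mem _ ha hb

lemma contr_mem (d : Module.Dual ℝ (EuclideanSpace ℝ (Fin n))) (k : ℕ)
    {x : ExteriorAlgebra ℝ (EuclideanSpace ℝ (Fin n))}
    (h : x ∈ ⋀[ℝ]^k (EuclideanSpace ℝ (Fin n))) :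
    CliffordAlgebra.contractLeft d x ∈ ⋀[ℝ]^(k-1) (EuclideanSpace ℝ (Fin n)) := by
  cases k with
  | zero => rw [contr_zero d h]; exact Submodule.zero_mem _
  | succ m => exact contr_mem_succ d m h

lemma amapinv_ι (v : EuclideanSpace ℝ (Fin n)) :
    ExteriorAlgebra.algebraMapInv (ExteriorAlgebra.ι ℝ v) = 0 := by
  simp [ExteriorAlgebra.algebraMapInv]

lemma amapinv_pow (k : ℕ) {x : ExteriorAlgebra ℝ (EuclideanSpace ℝ (Fin n))}
    (h : x ∈ ⋀[ℝ]^(k+1) (EuclideanSpace ℝ (Fin n))) :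
    ExteriorAlgebra.algebraMapInv x = 0 := by
  rw [expow_def, pow_succ'] at h
  refine Submodule.mul_induction_on h ?_ ?_
  · rintro _ ⟨v, rfl⟩ y _
    rw [map_mul, amapinv_ι, zero_mul]
  · intro a b ha hb
    rw [map_add, ha, hb, add_zero]

lemma eps_mem (l : List (Fin n)) :
    (l.map (fun k => ExteriorAlgebra.ι ℝ (EuclideanSpace.single k 1))).prod ∈
      ⋀[ℝ]^l.length (EuclideanSpace ℝ (Fin n)) := by
  induction l with
  | nil =>
    rw [List.map_nil, List.prod_nil, List.length_nil, expow_def, pow_zero]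
    exact Submodule.mem_one.mpr ⟨1, map_one (algebraMap ℝ _)⟩
  | cons a l ih =>
    have := SetLike.mul_mem_graded (A := 𝒜) (ι_mem_one (EuclideanSpace.single a 1)) ih
    rw [List.map_cons, List.prod_cons]
    simpa [Nat.add_comm] using this

lemma contr_eps (d : Module.Dual ℝ (EuclideanSpace ℝ (Fin n))) (l : List (Fin n))
    (h : ∀ k ∈ l, d (EuclideanSpace.single k 1) = 0) :
    CliffordAlgebra.contractLeft d
      (l.map (fun k => ExteriorAlgebra.ι ℝ (EuclideanSpace.single k 1))).prod = 0 := by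
  induction l with
  | nil => simpa using CliffordAlgebra.contractLeft_one _ _
  | cons a l ih =>
    rw [List.map_cons, List.prod_cons,
      CliffordAlgebra.contractLeft_ι_mul, h a List.mem_cons_self,
      ih (fun k hk => h k (List.mem_cons_of_mem _ hk)), mul_zero, sub_zero, zero_smul]

lemma toExt_prod_bv (l : List (Fin n)) (hl : l.Nodup) :
    toExt ((l.map (bv n)).prod) =
      (l.map (fun k => ExteriorAlgebra.ι ℝ (EuclideanSpace.single k 1))).prod := by
  induction l with
  | nil =>
    simp only [List.map_nil, List.prod_nil]
    exact CliffordAlgebra.changeForm_one (h := CliffordAlgebra.changeForm.associated_neg_proof)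
  | cons a l ih =>
    rw [List.map_cons, List.prod_cons, bv, toExt_ι_mul, ih (List.Nodup.of_cons hl),
      contr_eps _ l ?_, sub_zero, List.map_cons, List.prod_cons]
    intro k hk
    rw [Bf_single, if_neg]
    rintro rfl
    exact (List.nodup_cons.mp hl).1 hk

lemma amapinv_contr (d : Module.Dual ℝ (EuclideanSpace ℝ (Fin n)))
    (Y : ExteriorAlgebra ℝ (EuclideanSpace ℝ (Fin n))) :
    ExteriorAlgebra.algebraMapInv (CliffordAlgebra.contractLeft d Y) =
      ExteriorAlgebra.algebraMapInv
        (CliffordAlgebra.contractLeft d (GradedAlgebra.proj 𝒜 1 Y)) := by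
  induction Y using DirectSum.Decomposition.inductionOn 𝒜 with
  | zero => simp
  | @homogeneous i y =>
    obtain ⟨y, hy⟩ := y
    dsimp only
    rcases eq_or_ne i 1 with rfl | hi
    · rw [GradedAlgebra.proj_apply, DirectSum.decompose_of_mem_same 𝒜 hy]
    · rw [GradedAlgebra.proj_apply, DirectSum.decompose_of_mem_ne 𝒜 hy hi, map_zero, map_zero]
      match i, hi with
      | 0, _ => rw [contr_zero d hy, map_zero]
      | (m+2), _ => exact amapinv_pow m (contr_mem_succ d (m+1) hy)
  | add a b ha hb =>
    rw [map_add, map_add, ha, hb, map_add, map_add, map_add]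

end Aux

/-- If the nonzero `r`-vector `B` satisfies the Plücker relations and the
coefficient `B_J = ⟨(e_j ∧ e_K) B⟩₀` of `B` on `e_J = e_j ∧ e_K` is nonzero (`e_j` a
coordinate vector, `e_K` a coordinate `(r-1)`-blade), then
`B = B_J⁻¹ (e_K · B) ∧ (e_j · B)`, where `e_K·B = ⟨e_K B⟩₁` is a vector and
`e_j·B = ⟨e_j B⟩_{r-1}` an `(r-1)`-vector. -/
theorem stmt4 (n r : ℕ) (B : GA n) (hB : B ∈ gradeSub n r) (hB0 : B ≠ 0)
    (hPl : ∀ A ∈ gradeSub n (r - 1), wedge (gproj n 1 (A * B)) B = 0)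
    (j : Fin n) (K : Finset (Fin n)) (hK : K.card = r - 1) (hjK : j ∉ K)
    (hBJ : scalarPart (wedge (bv n j) (eB n K) * B) ≠ 0) :
    B = (scalarPart (wedge (bv n j) (eB n K) * B))⁻¹ •
        wedge (gproj n 1 (eB n K * B)) (gproj n (r - 1) (bv n j * B)) := by
  classical
  have hE : toExt B ∈ ⋀[ℝ]^r (EuclideanSpace ℝ (Fin n)) := Submodule.mem_comap.mp hB
  set L : List (Fin n) := K.sort (· ≤ ·) with hL
  have hnodup : L.Nodup := K.sort_nodup _
  have hlen : L.length = r - 1 := by rw [hL, Finset.length_sort, hK]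
  have hjL : j ∉ L := fun h => hjK ((Finset.mem_sort _).mp h)
  have heBK : toExt (eB n K) =
      (L.map (fun k => ExteriorAlgebra.ι ℝ (EuclideanSpace.single k 1))).prod :=
    toExt_prod_bv L hnodup
  have hmem : eB n K ∈ gradeSub n (r-1) := by
    refine Submodule.mem_comap.mpr ?_
    show toExt (eB n K) ∈ _
    rw [heBK]
    have := eps_mem L
    rwa [hlen] at this
  have hPl' := hPl (eB n K) hmem
  have hU1 : toExt (gproj n 1 (eB n K * B)) ∈ ⋀[ℝ]^1 (EuclideanSpace ℝ (Fin n)) := by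
    rw [toExt_gproj, GradedAlgebra.proj_apply]; exact SetLike.coe_mem _
  rw [expow_def, pow_one] at hU1
  obtain ⟨w, hw⟩ := hU1
  have hUE : ExteriorAlgebra.ι ℝ w * toExt B = 0 := by
    have h := congrArg toExt hPl'
    rw [toExt_wedge, map_zero] at h
    rw [hw]; exact h
  set d : Module.Dual ℝ (EuclideanSpace ℝ (Fin n)) :=
    QuadraticMap.associated (R := ℝ) (-Qe n) (EuclideanSpace.single j 1) with hd
  have hdk : ∀ k ∈ L, d (EuclideanSpace.single k 1) = 0 := by
    intro k hk
    rw [hd, Bf_single, if_neg]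
    rintro rfl; exact hjL hk
  have hwm : wedge (bv n j) (eB n K) = bv n j * eB n K := by
    apply toExt.injective
    rw [toExt_wedge, toExt_bv, heBK]
    show _ = toExt (ι (Qe n) (EuclideanSpace.single j 1) * eB n K)
    rw [toExt_ι_mul, heBK, ← hd, contr_eps _ _ hdk, sub_zero]
  have hsval : scalarPart (wedge (bv n j) (eB n K) * B) = - d w := by
    rw [hwm, mul_assoc]
    show ExteriorAlgebra.algebraMapInv (toExt (ι (Qe n) (EuclideanSpace.single j 1) *
      (eB n K * B))) = - d w
    rw [toExt_ι_mul, ← hd, map_sub, map_mul, amapinv_ι, zero_mul, zero_sub, amapinv_contr,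
      ← toExt_gproj, ← hw, CliffordAlgebra.contractLeft_ι]
    rw [ExteriorAlgebra.algebraMap_leftInverse _ (d w)]
  have hP : toExt (gproj n (r-1) (bv n j * B)) =
      - (CliffordAlgebra.contractLeft d (toExt B)) := by
    rw [toExt_gproj]
    show GradedAlgebra.proj _ (r-1) (toExt (ι (Qe n) (EuclideanSpace.single j 1) * B)) = _
    rw [toExt_ι_mul, ← hd, map_sub]
    have h1 : GradedAlgebra.proj (fun i : ℕ => ⋀[ℝ]^i (EuclideanSpace ℝ (Fin n))) (r-1)
        (ExteriorAlgebra.ι ℝ (EuclideanSpace.single j 1) * toExt B) = 0 := by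
      rw [GradedAlgebra.proj_apply, DirectSum.decompose_of_mem_ne
        (fun i : ℕ => ⋀[ℝ]^i (EuclideanSpace ℝ (Fin n)))
        (SetLike.mul_mem_graded (ι_mem_one _) hE) (by omega : 1 + r ≠ r - 1)]
    have h2 : GradedAlgebra.proj (fun i : ℕ => ⋀[ℝ]^i (EuclideanSpace ℝ (Fin n))) (r-1)
        (CliffordAlgebra.contractLeft d (toExt B)) =
        CliffordAlgebra.contractLeft d (toExt B) := by
      rw [GradedAlgebra.proj_apply, DirectSum.decompose_of_mem_same (fun i : ℕ => ⋀[ℝ]^i (EuclideanSpace ℝ (Fin n))) (contr_mem d r hE)]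
    rw [h1, h2, zero_sub]
  have key := CliffordAlgebra.contractLeft_ι_mul (Q := (0 : QuadraticForm ℝ
    (EuclideanSpace ℝ (Fin n)))) d w (toExt B)
  rw [hUE, map_zero] at key
  have hkey : ExteriorAlgebra.ι ℝ w * CliffordAlgebra.contractLeft d (toExt B) =
      d w • toExt B := (sub_eq_zero.mp key.symm).symm
  apply toExt.injective
  rw [map_smul, toExt_wedge, hP, ← hw, mul_neg, hkey,
    show d w = -(scalarPart (wedge (bv n j) (eB n K) * B)) by rw [hsval]; ring,
    neg_smul, neg_neg, smul_smul, inv_mul_cancel₀ hBJ, one_smul]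
end
end

section
/- Let B be an r-vector and v a vector in the geometric algebra G_n with B² = B·B (B² scalar). Then ⟨BvB⟩_{3,5,…} = 2⟨(B∧v)B⟩_{3,5,…}; in particular, if BvB is not a vector then B ∧ v ≠ 0, i.e. v ∧ B ≠ 0. -/
noncomputable section

open CliffordAlgebra

section Aux
open CliffordAlgebra
variable {M : Type*} [AddCommGroup M] [Module ℝ M]

lemma lemFC (Q : QuadraticForm ℝ M) (d : Module.Dual ℝ M) (x : CliffordAlgebra Q) :
    involute (contractLeft (Q := Q) d x) = - contractLeft (Q := Q) d (involute x) := by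
  induction x using CliffordAlgebra.left_induction with
  | algebraMap r => simp [contractLeft_algebraMap]
  | add x y hx hy => simp [map_add, hx, hy]; abel
  | ι_mul x m hx =>
      rw [contractLeft_ι_mul, map_sub, map_smul, map_mul involute, involute_ι, hx,
        map_mul involute, involute_ι]
      simp only [neg_mul, mul_neg, neg_neg, map_neg, contractLeft_ι_mul]

lemma lemA (Q : QuadraticForm ℝ M) (v : M) (x : CliffordAlgebra Q) :
    ι Q v * x = involute x * ι Q v
      + (2:ℝ) • contractLeft (Q := Q) (QuadraticMap.associated (R := ℝ) Q v) x := by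
  induction x using CliffordAlgebra.left_induction with
  | algebraMap r => simp [contractLeft_algebraMap, Algebra.commutes]
  | add x y hx hy =>
      rw [mul_add, hx, hy, map_add, map_add, add_mul, smul_add]; abel
  | ι_mul x m hx =>
      have h1 : ι Q v * ι Q m = algebraMap ℝ _ (QuadraticMap.polar Q v m) - ι Q m * ι Q v := by
        rw [eq_sub_iff_add_eq, ι_mul_ι_add_swap]
      have hpol : QuadraticMap.polar Q v m = 2 * QuadraticMap.associated (R := ℝ) Q v m := by
        simp [QuadraticMap.polar, QuadraticMap.associated_apply, invOf_eq_inv]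
      calc ι Q v * (ι Q m * x)
          = (algebraMap ℝ _ (QuadraticMap.polar Q v m) - ι Q m * ι Q v) * x := by
            rw [← mul_assoc, h1]
        _ = QuadraticMap.polar Q v m • x - ι Q m * (ι Q v * x) := by
            rw [sub_mul, ← Algebra.smul_def, mul_assoc]
        _ = QuadraticMap.polar Q v m • x - ι Q m * (involute x * ι Q v)
              - (2:ℝ) • (ι Q m * contractLeft (Q := Q) (QuadraticMap.associated (R := ℝ) Q v) x) := by
            rw [hx, mul_add, mul_smul_comm]; abel
        _ = involute (ι Q m * x) * ι Q v
              + (2:ℝ) • contractLeft (Q := Q) (QuadraticMap.associated (R := ℝ) Q v) (ι Q m * x) := by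
            rw [map_mul involute, involute_ι, contractLeft_ι_mul, hpol,
              smul_sub, smul_smul]
            simp only [neg_mul, mul_assoc]
            abel

lemma lemFcomm {Q Q' : QuadraticForm ℝ M} {B : LinearMap.BilinForm ℝ M}
    (h : B.toQuadraticMap = Q' - Q) (x : CliffordAlgebra Q) :
    changeForm h (involute x) = involute (changeForm h x) := by
  induction x using CliffordAlgebra.left_induction with
  | algebraMap r => simp [changeForm_algebraMap]
  | add x y hx hy => simp [map_add, hx, hy]
  | ι_mul x m hx =>
      rw [map_mul involute, involute_ι, neg_mul, map_neg, changeForm_ι_mul, changeForm_ι_mul,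
        map_sub, map_mul involute, involute_ι, lemFC, hx]
      simp only [neg_mul, neg_sub, sub_neg_eq_add, neg_add_rev, neg_neg]
      abel

lemma lemInv (Q : QuadraticForm ℝ M) (i : ℕ) (b : CliffordAlgebra Q)
    (hb : b ∈ (LinearMap.range (ι Q))^i) : involute b = ((-1:ℝ))^i • b := by
  induction hb using Submodule.pow_induction_on_left' with
  | algebraMap r => simp
  | add x y i hx hy ihx ihy => rw [map_add, ihx, ihy, smul_add]
  | mem_mul m hm i x hx ih =>
      obtain ⟨m, rfl⟩ := hm
      rw [map_mul involute, involute_ι, ih, neg_mul, mul_smul_comm, pow_succ, mul_comm,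
        mul_smul, neg_one_smul]

end Aux

set_option maxHeartbeats 1000000

/-- Let `B` be an `r`-vector with `B² = B·B` scalar, and `v` a vector.
Then `⟨B v B⟩_{3,5,…} = 2 ⟨(B ∧ v) B⟩_{3,5,…}` (parts of grade ≥ 3, i.e. everything except
the grade-1 part); in particular, if `B v B` is not a vector then `B ∧ v ≠ 0`,
i.e. `v ∧ B ≠ 0`. -/
theorem stmt17 (n r : ℕ) (B : GA n) (hB : B ∈ gradeSub n r)
    (hsc : B * B = algebraMap ℝ (GA n) (scalarPart (B * B)))
    (v : EuclideanSpace ℝ (Fin n)) :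
    (B * ι (Qe n) v * B - gproj n 1 (B * ι (Qe n) v * B) =
      (2 : ℝ) • (wedge B (ι (Qe n) v) * B - gproj n 1 (wedge B (ι (Qe n) v) * B))) ∧
    (B * ι (Qe n) v * B ∉ gradeSub n 1 →
      wedge B (ι (Qe n) v) ≠ 0 ∧ wedge (ι (Qe n) v) B ≠ 0) := by
  classical
  set e : GA n := ι (Qe n) v with he
  set E : ExteriorAlgebra ℝ (EuclideanSpace ℝ (Fin n)) := ExteriorAlgebra.ι ℝ v with hE
  set d : Module.Dual ℝ (EuclideanSpace ℝ (Fin n)) :=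
    QuadraticMap.associated (R := ℝ) (Qe n) v with hd
  set ε : ℝ := ((-1:ℝ))^r with hεdef
  have hε : ε * ε = 1 := by rw [hεdef, ← pow_add]; exact Even.neg_one_pow ⟨r, rfl⟩
  have hb : toExt B ∈ ⋀[ℝ]^r (EuclideanSpace ℝ (Fin n)) := Submodule.mem_comap.mp hB
  have hcomm : ∀ x : GA n, toExt x = changeForm CliffordAlgebra.changeForm.associated_neg_proof x :=
    fun x => by simp only [toExt, equivExterior, changeFormEquiv_apply]
  have hιE : toExt e = E := by rw [hcomm]; exact changeForm_ι (h := CliffordAlgebra.changeForm.associated_neg_proof (Q := Qe n)) v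
  have hE1 : E ∈ ⋀[ℝ]^1 (EuclideanSpace ℝ (Fin n)) := by
    change E ∈ LinearMap.range (ExteriorAlgebra.ι ℝ
      (M := EuclideanSpace ℝ (Fin n))) ^ 1
    rw [pow_one]
    exact ⟨v, rfl⟩
  have hinvb : involute (toExt B) = ε • toExt B := lemInv 0 r _ hb
  have hinvB : involute B = ε • B := by
    apply toExt.injective
    rw [map_smul, ← hinvb, hcomm, hcomm, ← lemFcomm]
  have hI : e * B = ε • (B * e) + (2:ℝ) • contractLeft (Q := Qe n) d B := by
    rw [he, lemA (Qe n) v B, hinvB, smul_mul_assoc]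
  have hmulE : toExt (e * B) = E * toExt B + contractLeft (Q := 0) d (toExt B) := by
    have h1 := changeForm_ι_mul (h := CliffordAlgebra.changeForm.associated_neg_proof (Q := Qe n))
      v B
    have hneg : (QuadraticMap.associated (R := ℝ) (-(Qe n))) v = -d := by
      simp [hd, map_neg]
    rw [hcomm, hcomm, h1, hneg]
    simp only [map_neg, LinearMap.neg_apply, sub_neg_eq_add]
    rfl
  have hcontr : contractLeft (Q := 0) d (toExt B) = toExt (contractLeft (Q := Qe n) d B) := by
    rw [hcomm B, hcomm (contractLeft (Q := Qe n) d B), ← changeForm_contractLeft]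
  have hwveB : wedge e B = e * B - contractLeft (Q := Qe n) d B := by
    rw [wedge, hιE, LinearEquiv.symm_apply_eq, map_sub, hmulE, hcontr]
    abel
  have hEb : E * toExt B = ε • (toExt B * E) := by
    have h0 := lemA (0 : QuadraticForm ℝ (EuclideanSpace ℝ (Fin n))) v (toExt B)
    have hz : QuadraticMap.associated (R := ℝ)
        (0 : QuadraticForm ℝ (EuclideanSpace ℝ (Fin n))) = 0 := map_zero _
    rw [hz, LinearMap.zero_apply, map_zero, LinearMap.zero_apply, smul_zero, add_zero, hinvb, smul_mul_assoc] at h0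
    exact h0
  have hBe : toExt B * E = ε • (E * toExt B) := by
    rw [hEb, smul_smul, hε, one_smul]
  have hwBe : wedge B e = ε • wedge e B := by
    rw [wedge, wedge, hιE, hBe, map_smul]
  have h2veB : (2:ℝ) • wedge e B = e * B + ε • (B * e) := by
    have hc : (2:ℝ) • contractLeft (Q := Qe n) d B = e * B - ε • (B * e) := by
      rw [hI]; abel
    rw [hwveB, smul_sub, hc, two_smul]
    abel
  have hkey : (2:ℝ) • wedge B e = B * e + ε • (e * B) := by
    rw [hwBe, smul_comm, h2veB, smul_add, smul_smul, hε, one_smul, add_comm]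
  have hscal : e * (B * B) = scalarPart (B * B) • e := by
    conv_lhs => rw [hsc]
    rw [← Algebra.commutes, ← Algebra.smul_def]
  have hBvB : B * e * B = (2:ℝ) • (wedge B e * B) - (ε * scalarPart (B * B)) • e := by
    have h3 : ((2:ℝ) • wedge B e) * B = (B * e + ε • (e * B)) * B := by rw [hkey]
    rw [smul_mul_assoc, add_mul, smul_mul_assoc, mul_assoc e B B, hscal, smul_smul] at h3
    rw [h3]; abel
  have hproj_ι : gproj n 1 e = e := by
    rw [gproj]
    simp only [LinearMap.comp_apply, LinearEquiv.coe_coe]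
    rw [hιE, GradedAlgebra.proj_apply, DirectSum.decompose_of_mem_same (fun i => ⋀[ℝ]^i (EuclideanSpace ℝ (Fin n))) hE1, ← hιE,
      LinearEquiv.symm_apply_apply]
  have hw : gproj n 1 ((ε * scalarPart (B * B)) • e) = (ε * scalarPart (B * B)) • e := by
    rw [map_smul, hproj_ι]
  constructor
  · rw [hBvB, map_sub, map_smul, hw, smul_sub]
    abel
  · intro hnot
    have hι1 : e ∈ gradeSub n 1 := by
      rw [gradeSub, Submodule.mem_comap]
      exact hιE ▸ hE1
    have h1 : wedge B e ≠ 0 := by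
      intro h0
      apply hnot
      rw [hBvB, h0, zero_mul, smul_zero, zero_sub]
      exact neg_mem (Submodule.smul_mem _ _ hι1)
    exact ⟨h1, fun h0 => h1 (by rw [hwBe, h0, smul_zero])⟩
end
end
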